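/- arXiv:2107.07861 — 4 statements merged into one kernel-verified Lean document; each statement's English description precedes it below -/
import Mathlib

section
/- Let α be irrational and let (x_n) be the sequence α, 2α, 2α, 3α, 3α, 3α, …, i.e., x_n = mα (mod 1) whenever C(m,2) < n ≤ C(m+1,2). Then for every nonzero integer k and every β ∈ (0,1), the Cesàro averages (1/N)∑_{n=1}^N e^{2πik x_n} e^{-2πinβ} tend to 0 as N → ∞. -/
open Filter Finset Topology
open Real Complex

lemma my_telescope (t : ℕ → ℕ) (ht : Monotone t) (f : ℕ → ℂ) (M : ℕ) :
    ∑ m ∈ Finset.range M, ∑ n ∈ Finset.Ioc (t m) (t (m+1)), f n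
      = ∑ n ∈ Finset.Ioc (t 0) (t M), f n := by
  induction M with
  | zero => simp
  | succ M ih =>
    rw [Finset.sum_range_succ, ih,
      Finset.sum_Ioc_consecutive _ (ht (Nat.zero_le M)) (ht (Nat.le_succ M))]

lemma my_geom (z : ℂ) (hz : z ≠ 1) (hz1 : ‖z‖ = 1) (a b : ℕ) :
    ‖∑ n ∈ Finset.Ioc a b, z^n‖ ≤ 2 / ‖1 - z‖ := by
  have hne : (1:ℂ) - z ≠ 0 := sub_ne_zero.2 (Ne.symm hz)
  have hpos : 0 < ‖(1:ℂ) - z‖ := norm_pos_iff.2 hne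
  rcases le_or_gt b a with h | h
  · rw [Finset.Ioc_eq_empty (by omega)]
    simp only [Finset.sum_empty, norm_zero]
    positivity
  · have key : ∑ n ∈ Finset.Ioc a b, z^n
      = z^(a+1) * ∑ i ∈ Finset.range (b - a), z^i := by
      rw [← Finset.Ico_add_one_add_one_eq_Ioc, Finset.sum_Ico_eq_sum_range, Finset.mul_sum]
      apply Finset.sum_congr (by congr 1; omega)
      intro i _
      rw [← pow_add]
    rw [key, norm_mul, norm_pow, hz1, one_pow, one_mul]
    rw [geom_sum_eq (by exact hz), norm_div]
    rw [div_le_div_iff₀ (norm_pos_iff.2 (sub_ne_zero.2 hz)) hpos]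
    have h1 : ‖z ^ (b-a) - 1‖ ≤ 2 := by
      calc ‖z ^ (b-a) - 1‖ ≤ ‖z^(b-a)‖ + ‖(1:ℂ)‖ := norm_sub_le _ _
      _ = 2 := by rw [norm_pow, hz1]; norm_num
    have h2 : ‖z - 1‖ = ‖(1:ℂ) - z‖ := norm_sub_rev _ _
    rw [h2]
    nlinarith [hpos.le]

lemma key_bound (α : ℝ) (x : ℕ → ℝ)
    (hx : ∀ m n : ℕ, Nat.choose m 2 < n → n ≤ Nat.choose (m + 1) 2 →
      x n = Int.fract ((m : ℝ) * α))
    (k : ℤ) (β : ℝ) (z : ℂ) (hzdef : z = Complex.exp (-(2*π*Complex.I*β)))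
    (hz : z ≠ 1) (hz1 : ‖z‖ = 1) (N : ℕ) :
    ‖∑ n ∈ Finset.Icc 1 N,
      Complex.exp (2 * π * Complex.I * (k : ℂ) * (x n : ℂ)) *
        Complex.exp (-(2 * π * Complex.I * (n : ℂ) * (β : ℂ)))‖
      ≤ (2 * Nat.sqrt N + 2) * (2 / ‖1 - z‖) := by
  set f : ℕ → ℂ := fun n => Complex.exp (2 * π * Complex.I * (k : ℂ) * (x n : ℂ)) *
        Complex.exp (-(2 * π * Complex.I * (n : ℂ) * (β : ℂ))) with hf
  have hzn : ∀ n : ℕ, Complex.exp (-(2 * π * Complex.I * (n : ℂ) * (β : ℂ))) = z ^ n := by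
    intro n
    rw [hzdef, ← Complex.exp_nat_mul]
    ring_nf
  set s := Nat.sqrt N with hs
  set M := 2 * s + 2 with hM
  set t : ℕ → ℕ := fun m => min (Nat.choose (m+1) 2) N with ht
  have hmono : Monotone t := by
    intro a b hab
    exact min_le_min (Nat.choose_le_choose 2 (by omega)) le_rfl
  have ht0 : t 0 = 0 := by
    simp [ht, Nat.choose_eq_zero_of_lt (by norm_num : 1 < 2)]
  have hchoose : N ≤ Nat.choose (M + 1) 2 := by
    have h1 : Nat.choose (M+1) 2 = (2*s+3) * (2*s+2) / 2 := by
      rw [Nat.choose_two_right]; congr 1 <;> omega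
    have h2 : (2*s+3) * (2*s+2) = ((2*s+3)*(s+1)) * 2 := by ring
    have h3 : N < (s+1) * (s+1) := Nat.lt_succ_sqrt N
    rw [h1, h2, Nat.mul_div_cancel _ (by norm_num)]
    nlinarith
  have htM : t M = N := min_eq_right hchoose
  have hIcc : Finset.Icc 1 N = Finset.Ioc 0 N := by ext n; simp; omega
  have hsplit : ∑ n ∈ Finset.Icc 1 N, f n
      = ∑ m ∈ Finset.range M, ∑ n ∈ Finset.Ioc (t m) (t (m+1)), f n := by
    rw [my_telescope t hmono f M, ht0, htM, hIcc]
  rw [hsplit]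
  calc ‖∑ m ∈ Finset.range M, ∑ n ∈ Finset.Ioc (t m) (t (m+1)), f n‖
      ≤ ∑ m ∈ Finset.range M, ‖∑ n ∈ Finset.Ioc (t m) (t (m+1)), f n‖ :=
        norm_sum_le _ _
    _ ≤ ∑ m ∈ Finset.range M, (2 / ‖1 - z‖) := by
        apply Finset.sum_le_sum
        intro m _
        rcases le_or_gt (t (m+1)) (t m) with hle | hlt
        · rw [Finset.Ioc_eq_empty (by omega)]
          simp only [Finset.sum_empty, norm_zero]
          positivity
        · have hcm : Nat.choose (m+1) 2 ≤ Nat.choose (m+1+1) 2 :=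
            Nat.choose_le_choose 2 (by omega)
          have htm : t m = Nat.choose (m+1) 2 ∧ t (m+1) ≤ Nat.choose (m+1+1) 2 := by
            simp only [ht] at hlt ⊢
            omega
          set c : ℂ := Complex.exp (2 * π * Complex.I * (k : ℂ) *
            Complex.ofReal (Int.fract (((m+1 : ℕ) : ℝ) * α))) with hc
          have hcong : ∀ n ∈ Finset.Ioc (t m) (t (m+1)), f n = c * z ^ n := by
            intro n hn
            rw [Finset.mem_Ioc] at hn
            obtain ⟨h1, h2⟩ := htm
            have hxn := hx (m+1) n (by omega) (by omega)
            simp only [hf]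
            rw [hxn, hzn n, hc]
          rw [Finset.sum_congr rfl hcong, ← Finset.mul_sum, norm_mul]
          have hc1 : ‖c‖ = 1 := by
            rw [hc, Complex.norm_exp]
            have : (2 * (π:ℂ) * Complex.I * (k : ℂ) *
                Complex.ofReal (Int.fract (((m+1 : ℕ) : ℝ) * α))).re = 0 := by simp
            rw [this, Real.exp_zero]
          rw [hc1, one_mul]
          exact my_geom z hz hz1 _ _
    _ = M * (2 / ‖1 - z‖) := by rw [Finset.sum_const, Finset.card_range, nsmul_eq_mul]
    _ ≤ (2 * Nat.sqrt N + 2) * (2 / ‖1 - z‖) := by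
        apply mul_le_mul_of_nonneg_right _ (by positivity)
        rw [hM, hs]
        push_cast
        linarith

lemma my_sqrt_atTop : Tendsto Real.sqrt atTop atTop := by
  apply tendsto_atTop_atTop.2
  intro b
  refine ⟨b^2 + 1, fun x hx => ?_⟩
  rcases le_or_gt b 0 with hb | hb
  · exact hb.trans (Real.sqrt_nonneg x)
  · rw [show b = Real.sqrt (b^2) by rw [Real.sqrt_sq hb.le]]
    exact Real.sqrt_le_sqrt (by nlinarith)

lemma my_g_tendsto (C : ℝ) : Tendsto (fun N : ℕ => (2*Real.sqrt N + 2)*C/N) atTop (nhds 0) := by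
  have h1 : Tendsto (fun x : ℝ => (2*Real.sqrt x + 2)*C/x) atTop (nhds 0) := by
    have h2 : Tendsto (fun x : ℝ => 2*C/Real.sqrt x + 2*C/x) atTop (nhds 0) := by
      have := (tendsto_const_nhds (x := 2*C)).div_atTop my_sqrt_atTop
      have h3 := (tendsto_const_nhds (x := 2*C)).div_atTop (tendsto_id (α := ℝ))
      simpa using this.add h3
    apply h2.congr'
    filter_upwards [eventually_gt_atTop 0] with x hx
    have hs : Real.sqrt x > 0 := Real.sqrt_pos.2 hx
    field_simp
    ring_nf
    rw [Real.sq_sqrt hx.le]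
    ring
  exact h1.comp tendsto_natCast_atTop_atTop

theorem stmt0 (α : ℝ) (hα : Irrational α) (x : ℕ → ℝ)
    (hx : ∀ m n : ℕ, Nat.choose m 2 < n → n ≤ Nat.choose (m + 1) 2 →
      x n = Int.fract ((m : ℝ) * α))
    (k : ℤ) (hk : k ≠ 0) (β : ℝ) (hβ : β ∈ Set.Ioo (0 : ℝ) 1) :
    Tendsto (fun N : ℕ => (1 / (N : ℂ)) * ∑ n ∈ Finset.Icc 1 N,
      Complex.exp (2 * Real.pi * Complex.I * (k : ℂ) * (x n : ℂ)) *
        Complex.exp (-(2 * Real.pi * Complex.I * (n : ℂ) * (β : ℂ))))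
      atTop (nhds 0) := by
  set z := Complex.exp (-(2*Real.pi*Complex.I*β)) with hzdef
  have hz : z ≠ 1 := by
    intro h
    rw [hzdef, Complex.exp_eq_one_iff] at h
    obtain ⟨n, hn⟩ := h
    have him := congrArg Complex.im hn
    simp [Complex.mul_im] at him
    obtain ⟨h0, h1⟩ := hβ
    have hπ := Real.pi_pos
    have hb : β = -n := by nlinarith
    have hn0 : (n:ℝ) < 0 := by nlinarith
    have hn1 : (-1:ℝ) < n := by nlinarith
    have : (n:ℤ) < 0 := by exact_mod_cast hn0
    have : (-1:ℤ) < n := by exact_mod_cast hn1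
    omega
  have hz1 : ‖z‖ = 1 := by
    rw [hzdef, Complex.norm_exp]
    simp
  set C := 2 / ‖1 - z‖ with hC
  have hC0 : 0 ≤ C := by positivity
  rw [tendsto_zero_iff_norm_tendsto_zero]
  apply squeeze_zero (g := fun N : ℕ => (2*Real.sqrt N + 2)*C/N)
    (fun N => norm_nonneg _) _ (my_g_tendsto C)
  intro N
  rcases Nat.eq_zero_or_pos N with h | h
  · subst h; simp
  · have hN : (0:ℝ) < N := by exact_mod_cast h
    calc ‖(1 / (N : ℂ)) * ∑ n ∈ Finset.Icc 1 N,
        Complex.exp (2 * Real.pi * Complex.I * (k : ℂ) * (x n : ℂ)) *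
          Complex.exp (-(2 * Real.pi * Complex.I * (n : ℂ) * (β : ℂ)))‖
        = ‖∑ n ∈ Finset.Icc 1 N,
            Complex.exp (2 * Real.pi * Complex.I * (k : ℂ) * (x n : ℂ)) *
              Complex.exp (-(2 * Real.pi * Complex.I * (n : ℂ) * (β : ℂ)))‖ / N := by
          rw [norm_mul, norm_div, norm_one, Complex.norm_natCast, one_div, inv_mul_eq_div]
      _ ≤ ((2 * Nat.sqrt N + 2) * C) / N := by
          gcongr
          exact key_bound α x hx k β z hzdef hz hz1 N
      _ ≤ (2 * Real.sqrt N + 2) * C / N := by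
          gcongr
          exact Real.nat_sqrt_le_real_sqrt
end

section
/- Every Besicovitch almost periodic sequence is a compact sequence. -/
open Filter Finset MeasureTheory Topology
open scoped Classical

/-- The Cesàro averages of `‖x n‖` are bounded (limsup finite). -/
def CesaroBounded (x : ℕ → ℂ) : Prop :=
  ∃ C : ℝ, ∀ N : ℕ, (1 / (N : ℝ)) * ∑ n ∈ Finset.Icc 1 N, ‖x n‖ ≤ C

/-- A bounded sequence. -/
def SeqBdd (y : ℕ → ℂ) : Prop := ∃ C : ℝ, ∀ n : ℕ, ‖y n‖ ≤ C

/-- `ℓ h` is the limit of the shifted correlations of `x` against `y` along `Nq`. -/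
def CorrLim (x y : ℕ → ℂ) (Nq : ℕ → ℕ) (ℓ : ℕ → ℂ) : Prop :=
  ∀ h : ℕ, 1 ≤ h →
    Tendsto (fun q : ℕ => (1 / (Nq q : ℂ)) * ∑ n ∈ Finset.Icc 1 (Nq q),
      x (n + h) * (starRingEnd ℂ) (y n)) atTop (nhds (ℓ h))

/-- A weakly mixing sequence of complex numbers. -/
def WeaklyMixingSeq (x : ℕ → ℂ) : Prop :=
  CesaroBounded x ∧
  ∀ y : ℕ → ℂ, SeqBdd y → ∀ Nq : ℕ → ℕ, StrictMono Nq → ∀ ℓ : ℕ → ℂ,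
    CorrLim x y Nq ℓ →
    Tendsto (fun H : ℕ => (1 / (H : ℝ)) * ∑ h ∈ Finset.Icc 1 H, ‖ℓ h‖) atTop (nhds 0)

/-- A strongly mixing sequence of complex numbers. -/
def StronglyMixingSeq (x : ℕ → ℂ) : Prop :=
  CesaroBounded x ∧
  ∀ y : ℕ → ℂ, SeqBdd y → ∀ Nq : ℕ → ℕ, StrictMono Nq → ∀ ℓ : ℕ → ℂ,
    CorrLim x y Nq ℓ →
    Tendsto (fun h : ℕ => ‖ℓ h‖) atTop (nhds 0)

/-- A compact sequence of complex numbers. -/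
def CompactSeq (c : ℕ → ℂ) : Prop :=
  SeqBdd c ∧
  ∀ ε : ℝ, 0 < ε → ∃ K : ℕ, 1 ≤ K ∧ ∀ m : ℕ, 1 ≤ m →
    ∃ k : ℕ, 1 ≤ k ∧ k ≤ K ∧
      Filter.limsup (fun N : ℕ => (1 / (N : ℝ)) *
        ∑ n ∈ Finset.Icc 1 N, ‖c (n + m) - c (n + k)‖ ^ 2) atTop < ε

/-- A Besicovitch almost periodic sequence. -/
def BesicovitchAP (x : ℕ → ℂ) : Prop :=
  SeqBdd x ∧
  ∀ ε : ℝ, 0 < ε → ∃ (J : ℕ) (a lam : Fin J → ℂ),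
    (∀ j, ‖lam j‖ = 1) ∧
    Filter.limsup (fun N : ℕ => (1 / (N : ℝ)) *
      ∑ n ∈ Finset.Icc 1 N, ‖x n - ∑ j, a j * lam j ^ n‖) atTop < ε

theorem stmt4 (x : ℕ → ℂ) (hx : BesicovitchAP x) : CompactSeq x := by
  obtain ⟨hbdd, hap⟩ := hx
  refine ⟨hbdd, ?_⟩
  obtain ⟨C0, hC0⟩ := hbdd
  set C : ℝ := max C0 1 with hC
  have hC1 : (1:ℝ) ≤ C := le_max_right _ _
  have hCpos : (0:ℝ) < C := lt_of_lt_of_le one_pos hC1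
  have hxC : ∀ n, ‖x n‖ ≤ C := fun n => (hC0 n).trans (le_max_left _ _)
  intro ε hε
  set δ : ℝ := ε / (20 * C) with hδdef
  have hδpos : 0 < δ := div_pos hε (by positivity)
  obtain ⟨J, a, lam, hlam, hlim⟩ := hap δ hδpos
  set P : ℕ → ℂ := fun n => ∑ j, a j * lam j ^ n with hP
  set A : ℝ := ∑ j, ‖a j‖ with hA
  have hA0 : 0 ≤ A := Finset.sum_nonneg fun j _ => norm_nonneg _
  set δ' : ℝ := δ / (A + 1) with hδ'
  have hδ'pos : 0 < δ' := div_pos hδpos (by linarith)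
  -- bound on P
  have hPA : ∀ n, ‖P n‖ ≤ A := by
    intro n
    refine (norm_sum_le _ _).trans ?_
    rw [hA]
    refine Finset.sum_le_sum fun j _ => ?_
    rw [norm_mul, norm_pow, hlam j, one_pow, mul_one]
  -- the torus net
  set F : ℕ → (Fin J → ℂ) := fun m j => lam j ^ (m + 1) with hF
  have hFb : Set.range F ⊆ Metric.closedBall 0 1 := by
    rintro _ ⟨m, rfl⟩
    rw [Metric.mem_closedBall, dist_zero_right]
    refine (pi_norm_le_iff_of_nonneg zero_le_one).2 fun j => ?_
    simp only [hF]
    rw [norm_pow, hlam j, one_pow]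
  have htb : TotallyBounded (Set.range F) :=
    (isCompact_closedBall (0 : Fin J → ℂ) 1).totallyBounded.subset hFb
  obtain ⟨t, hts, htfin, htcov⟩ := totallyBounded_iff_subset.1 htb
    {p : (Fin J → ℂ) × (Fin J → ℂ) | dist p.1 p.2 < δ'} (Metric.dist_mem_uniformity hδ'pos)
  set g : (Fin J → ℂ) → ℕ := fun y => if h : ∃ q, F q = y then h.choose else 0 with hg
  set K : ℕ := htfin.toFinset.sup g + 1 with hK
  refine ⟨K, by rw [hK]; omega, fun m hm => ?_⟩
  -- find k
  have hmem : F (m - 1) ∈ ⋃ y ∈ t, {z | (z, y) ∈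
      {p : (Fin J → ℂ) × (Fin J → ℂ) | dist p.1 p.2 < δ'}} :=
    htcov (Set.mem_range_self _)
  obtain ⟨y, hyt, hdy⟩ := Set.mem_iUnion₂.1 hmem
  have hyr : ∃ q, F q = y := hts hyt
  set k : ℕ := g y + 1 with hk
  have hgy : F (g y) = y := by
    rw [hg]; simp only [dif_pos hyr]; exact hyr.choose_spec
  have hk1 : 1 ≤ k := by omega
  have hkK : k ≤ K := by
    have : g y ≤ htfin.toFinset.sup g :=
      Finset.le_sup (htfin.mem_toFinset.2 hyt)
    omega
  have hdist : dist (F (m - 1)) (F (g y)) < δ' := by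
    rw [hgy]; exact hdy
  have hnet : ∀ j, ‖lam j ^ m - lam j ^ k‖ ≤ δ' := by
    intro j
    have h1 : lam j ^ m = F (m - 1) j := by
      simp only [hF]; congr 1; omega
    have h2 : lam j ^ k = F (g y) j := by
      simp only [hF, hk]
    rw [h1, h2]
    have := norm_le_pi_norm (F (m - 1) - F (g y)) j
    simp only [Pi.sub_apply] at this
    refine this.trans ?_
    rw [← dist_eq_norm]
    exact hdist.le
  -- P difference bound
  have hPdiff : ∀ n : ℕ, ‖P (n + m) - P (n + k)‖ ≤ δ := by
    intro n
    have heq : P (n + m) - P (n + k) = ∑ j, a j * lam j ^ n * (lam j ^ m - lam j ^ k) := by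
      rw [hP]
      simp only
      rw [← Finset.sum_sub_distrib]
      refine Finset.sum_congr rfl fun j _ => ?_
      rw [pow_add, pow_add]; ring
    rw [heq]
    calc ‖∑ j, a j * lam j ^ n * (lam j ^ m - lam j ^ k)‖
        ≤ ∑ j, ‖a j * lam j ^ n * (lam j ^ m - lam j ^ k)‖ := norm_sum_le _ _
      _ ≤ ∑ j, ‖a j‖ * δ' := by
          refine Finset.sum_le_sum fun j _ => ?_
          rw [norm_mul, norm_mul, norm_pow, hlam j, one_pow, mul_one]
          exact mul_le_mul_of_nonneg_left (hnet j) (norm_nonneg _)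
      _ = A * δ' := by rw [hA, Finset.sum_mul]
      _ ≤ (A + 1) * δ' := by nlinarith
      _ = δ := by rw [hδ']; field_simp
  -- the averaged approximation
  set G : ℕ → ℝ := fun N => (1 / (N : ℝ)) * ∑ n ∈ Finset.Icc 1 N, ‖x n - P n‖ with hG
  have hlim' : Filter.limsup G atTop < δ := hlim
  have hGb : ∀ N, G N ≤ C + A := by
    intro N
    rcases Nat.eq_zero_or_pos N with h0 | h0
    · simp [hG, h0]; positivity
    · have hsum : ∑ n ∈ Finset.Icc 1 N, ‖x n - P n‖ ≤ (N : ℝ) * (C + A) := by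
        calc ∑ n ∈ Finset.Icc 1 N, ‖x n - P n‖
            ≤ ∑ _n ∈ Finset.Icc 1 N, (C + A) := by
              refine Finset.sum_le_sum fun n _ => ?_
              exact (norm_sub_le _ _).trans (add_le_add (hxC n) (hPA n))
          _ = (N : ℝ) * (C + A) := by
              rw [Finset.sum_const, Nat.card_Icc]
              simp only [Nat.add_sub_cancel, nsmul_eq_mul]
      rw [hG]
      have hNpos : (0:ℝ) < N := by exact_mod_cast h0
      calc (1 / (N : ℝ)) * ∑ n ∈ Finset.Icc 1 N, ‖x n - P n‖
          ≤ (1 / (N : ℝ)) * ((N : ℝ) * (C + A)) := by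
            exact mul_le_mul_of_nonneg_left hsum (by positivity)
        _ = C + A := by field_simp
  have hev : ∀ᶠ N : ℕ in atTop, G N < δ :=
    eventually_lt_of_limsup_lt hlim' (isBoundedUnder_of ⟨C + A, hGb⟩)
  -- shifted averages
  have hshift : ∀ h : ℕ, 1 ≤ h → ∀ᶠ N : ℕ in atTop,
      (1 / (N : ℝ)) * ∑ n ∈ Finset.Icc 1 N, ‖x (n + h) - P (n + h)‖ < 2 * δ := by
    intro h hh
    have h1 : ∀ᶠ N : ℕ in atTop, G (N + h) < δ := (tendsto_add_atTop_nat h).eventually hev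
    filter_upwards [h1, eventually_ge_atTop h, eventually_ge_atTop 1] with N hN1 hNh hN1'
    have hNpos : (0:ℝ) < N := by exact_mod_cast hN1'
    have hNhpos : (0:ℝ) < (N : ℝ) + (h : ℝ) := by positivity
    have hsum1 : ∑ n ∈ Finset.Icc 1 N, ‖x (n + h) - P (n + h)‖
        ≤ ∑ n ∈ Finset.Icc 1 (N + h), ‖x n - P n‖ := by
      have heq : ∑ n ∈ Finset.Icc 1 N, ‖x (n + h) - P (n + h)‖
          = ∑ n ∈ Finset.Icc (1 + h) (N + h), ‖x n - P n‖ := by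
        rw [show Finset.Icc (1 + h) (N + h) = (Finset.Icc 1 N).map (addRightEmbedding h) from
          (Finset.map_add_right_Icc 1 N h).symm, Finset.sum_map]
        rfl
      rw [heq]
      refine Finset.sum_le_sum_of_subset_of_nonneg
        (Finset.Icc_subset_Icc (by omega) le_rfl) fun n _ _ => norm_nonneg _
    have hfrac : (1 : ℝ) / N ≤ 2 / ((N : ℝ) + h) := by
      rw [div_le_div_iff₀ hNpos hNhpos]
      have : (h : ℝ) ≤ N := by exact_mod_cast hNh
      linarith
    calc (1 / (N : ℝ)) * ∑ n ∈ Finset.Icc 1 N, ‖x (n + h) - P (n + h)‖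
        ≤ (1 / (N : ℝ)) * ∑ n ∈ Finset.Icc 1 (N + h), ‖x n - P n‖ :=
          mul_le_mul_of_nonneg_left hsum1 (by positivity)
      _ ≤ (2 / ((N : ℝ) + h)) * ∑ n ∈ Finset.Icc 1 (N + h), ‖x n - P n‖ :=
          mul_le_mul_of_nonneg_right hfrac
            (Finset.sum_nonneg fun n _ => norm_nonneg _)
      _ = 2 * G (N + h) := by
          rw [hG]; push_cast; ring
      _ < 2 * δ := by linarith
  refine ⟨k, hk1, hkK, ?_⟩
  -- final eventual bound
  have hfinal : ∀ᶠ N : ℕ in atTop, (1 / (N : ℝ)) *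
      ∑ n ∈ Finset.Icc 1 N, ‖x (n + m) - x (n + k)‖ ^ 2 ≤ ε / 2 := by
    filter_upwards [hshift m hm, hshift k hk1, eventually_ge_atTop 1] with N h1 h2 hN1
    have hNpos : (0:ℝ) < N := by exact_mod_cast hN1
    have hpt : ∀ n : ℕ, ‖x (n + m) - x (n + k)‖ ^ 2
        ≤ 2 * C * (‖x (n + m) - P (n + m)‖ + ‖x (n + k) - P (n + k)‖ + δ) := by
      intro n
      have hd2C : ‖x (n + m) - x (n + k)‖ ≤ 2 * C := by
        have := norm_sub_le (x (n + m)) (x (n + k))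
        have h1 := hxC (n + m); have h2 := hxC (n + k)
        linarith
      have htri : ‖x (n + m) - x (n + k)‖
          ≤ ‖x (n + m) - P (n + m)‖ + ‖P (n + m) - P (n + k)‖ + ‖P (n + k) - x (n + k)‖ := by
        have : x (n + m) - x (n + k) = (x (n + m) - P (n + m)) + (P (n + m) - P (n + k))
            + (P (n + k) - x (n + k)) := by ring
        rw [this]
        exact norm_add₃_le
      have htri' : ‖x (n + m) - x (n + k)‖
          ≤ ‖x (n + m) - P (n + m)‖ + ‖x (n + k) - P (n + k)‖ + δ := by
        have := hPdiff n
        rw [norm_sub_rev (P (n + k))] at htri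
        linarith
      have hnn : (0:ℝ) ≤ ‖x (n + m) - x (n + k)‖ := norm_nonneg _
      calc ‖x (n + m) - x (n + k)‖ ^ 2
          = ‖x (n + m) - x (n + k)‖ * ‖x (n + m) - x (n + k)‖ := sq _
        _ ≤ (2 * C) * ‖x (n + m) - x (n + k)‖ :=
            mul_le_mul_of_nonneg_right hd2C hnn
        _ ≤ 2 * C * (‖x (n + m) - P (n + m)‖ + ‖x (n + k) - P (n + k)‖ + δ) :=
            mul_le_mul_of_nonneg_left htri' (by positivity)
    have hsum : (1 / (N : ℝ)) * ∑ n ∈ Finset.Icc 1 N, ‖x (n + m) - x (n + k)‖ ^ 2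
        ≤ 2 * C * ((1 / (N : ℝ)) * ∑ n ∈ Finset.Icc 1 N, ‖x (n + m) - P (n + m)‖
          + (1 / (N : ℝ)) * ∑ n ∈ Finset.Icc 1 N, ‖x (n + k) - P (n + k)‖ + δ) := by
      have hs : ∑ n ∈ Finset.Icc 1 N, ‖x (n + m) - x (n + k)‖ ^ 2
          ≤ ∑ n ∈ Finset.Icc 1 N,
            (2 * C * (‖x (n + m) - P (n + m)‖ + ‖x (n + k) - P (n + k)‖ + δ)) :=
        Finset.sum_le_sum fun n _ => hpt n
      have hexp : ∑ n ∈ Finset.Icc 1 N,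
          (2 * C * (‖x (n + m) - P (n + m)‖ + ‖x (n + k) - P (n + k)‖ + δ))
          = 2 * C * (∑ n ∈ Finset.Icc 1 N, ‖x (n + m) - P (n + m)‖
            + ∑ n ∈ Finset.Icc 1 N, ‖x (n + k) - P (n + k)‖ + (N : ℝ) * δ) := by
        rw [← Finset.mul_sum]
        congr 1
        rw [Finset.sum_add_distrib, Finset.sum_add_distrib, Finset.sum_const, Nat.card_Icc]
        simp [Nat.add_sub_cancel, nsmul_eq_mul]
      calc (1 / (N : ℝ)) * ∑ n ∈ Finset.Icc 1 N, ‖x (n + m) - x (n + k)‖ ^ 2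
          ≤ (1 / (N : ℝ)) * (2 * C * (∑ n ∈ Finset.Icc 1 N, ‖x (n + m) - P (n + m)‖
            + ∑ n ∈ Finset.Icc 1 N, ‖x (n + k) - P (n + k)‖ + (N : ℝ) * δ)) := by
            rw [← hexp]
            exact mul_le_mul_of_nonneg_left hs (by positivity)
        _ = 2 * C * ((1 / (N : ℝ)) * ∑ n ∈ Finset.Icc 1 N, ‖x (n + m) - P (n + m)‖
            + (1 / (N : ℝ)) * ∑ n ∈ Finset.Icc 1 N, ‖x (n + k) - P (n + k)‖ + δ) := by
            field_simp
    calc (1 / (N : ℝ)) * ∑ n ∈ Finset.Icc 1 N, ‖x (n + m) - x (n + k)‖ ^ 2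
        ≤ 2 * C * ((1 / (N : ℝ)) * ∑ n ∈ Finset.Icc 1 N, ‖x (n + m) - P (n + m)‖
          + (1 / (N : ℝ)) * ∑ n ∈ Finset.Icc 1 N, ‖x (n + k) - P (n + k)‖ + δ) := hsum
      _ ≤ 2 * C * (2 * δ + 2 * δ + δ) := by
          refine mul_le_mul_of_nonneg_left ?_ (by positivity)
          linarith
      _ = 10 * C * δ := by ring
      _ = ε / 2 := by
          rw [hδdef]
          field_simp
          ring
  have hco : IsCoboundedUnder (· ≤ ·) atTop
      (fun N : ℕ => (1 / (N : ℝ)) * ∑ n ∈ Finset.Icc 1 N, ‖x (n + m) - x (n + k)‖ ^ 2) :=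
    isCoboundedUnder_le_of_le atTop (x := 0) fun N => by positivity
  have := limsup_le_of_le hco hfinal
  linarith
end

section
/- Let ([0,1], B, μ, T) be a measure-preserving system. Suppose that for every f ∈ L^∞ with ∫ f dμ = 0 there is a full-measure set A_f such that for every x ∈ A_f the sequence (f(Tⁿx)) is a strongly mixing sequence. Then T is strongly mixing: for all measurable A, B, lim_{h→∞} μ(T⁻ʰA ∩ B) = μ(A)μ(B). -/
open Filter Finset MeasureTheory Topology
open scoped Classical

section SMaux
open scoped ENNReal
variable {X : Type*} [MeasurableSpace X]

/-- If `‖u q‖ ≤ (1/2)^q` in `L²(μ)` over a probability space, then `u q → 0` a.e. -/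
lemma sm_ae_tendsto_of_norm_le (μ : Measure X) [IsProbabilityMeasure μ]
    (u : ℕ → Lp ℂ 2 μ) (hu : ∀ q, ‖u q‖ ≤ (1/2 : ℝ)^q) :
    ∀ᵐ x ∂μ, Tendsto (fun q => (u q : X → ℂ) x) atTop (𝓝 0) := by
  have hmeas : ∀ q : ℕ, AEMeasurable (fun x => (‖(u q : X → ℂ) x‖₊ : ℝ≥0∞)) μ :=
    fun q => (Lp.aestronglyMeasurable (u q)).aemeasurable.nnnorm.coe_nnreal_ennreal
  have hsum : ∫⁻ x, ∑' q, (‖(u q : X → ℂ) x‖₊ : ℝ≥0∞) ∂μ ≠ ∞ := by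
    rw [lintegral_tsum hmeas]
    have h1 : ∀ q : ℕ, ∫⁻ x, (‖(u q : X → ℂ) x‖₊ : ℝ≥0∞) ∂μ ≤ (2 : ℝ≥0∞)⁻¹ ^ q := by
      intro q
      have e1 : ∫⁻ x, (‖(u q : X → ℂ) x‖₊ : ℝ≥0∞) ∂μ = eLpNorm (u q) 1 μ := by
        simp [eLpNorm_one_eq_lintegral_enorm]
        rfl
      rw [e1]
      calc eLpNorm (u q) 1 μ ≤ eLpNorm (u q) 2 μ :=
            eLpNorm_le_eLpNorm_of_exponent_le (by norm_num) (Lp.aestronglyMeasurable _)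
        _ ≤ (2 : ℝ≥0∞)⁻¹ ^ q := by
            have h2 : eLpNorm (u q) 2 μ = ENNReal.ofReal ‖u q‖ := by
              rw [Lp.norm_def, ENNReal.ofReal_toReal (Lp.eLpNorm_ne_top _)]
            rw [h2]
            calc ENNReal.ofReal ‖u q‖ ≤ ENNReal.ofReal ((1/2 : ℝ)^q) :=
                  ENNReal.ofReal_le_ofReal (hu q)
              _ = (2 : ℝ≥0∞)⁻¹ ^ q := by
                  rw [ENNReal.ofReal_pow (by norm_num)]
                  congr 1
                  rw [one_div, ENNReal.ofReal_inv_of_pos (by norm_num)]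
                  norm_num
    refine ne_top_of_le_ne_top ?_ (ENNReal.tsum_le_tsum h1)
    simpa only [ENNReal.tsum_geometric, ENNReal.one_sub_inv_two, inv_inv] using ENNReal.ofNat_ne_top
  have hae := ae_lt_top' (AEMeasurable.ennreal_tsum hmeas) hsum
  filter_upwards [hae] with x hx
  have h0 : Tendsto (fun q => (‖(u q : X → ℂ) x‖₊ : ℝ≥0∞)) atTop (𝓝 0) :=
    ENNReal.tendsto_atTop_zero_of_tsum_ne_top hx.ne
  have h1 : Tendsto (fun q => ‖(u q : X → ℂ) x‖₊) atTop (𝓝 0) := by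
    rw [← ENNReal.coe_zero] at h0
    exact (ENNReal.tendsto_coe).mp h0
  have h2 : Tendsto (fun q => ‖(u q : X → ℂ) x‖) atTop (𝓝 0) := by
    have := (NNReal.tendsto_coe (f := atTop)).mpr h1
    simpa using this
  exact tendsto_zero_iff_norm_tendsto_zero.mpr h2

set_option maxHeartbeats 1000000 in
lemma sm_key (μ : Measure X) [IsProbabilityMeasure μ] (T : X → X)
    (hT : MeasurePreserving T μ μ)
    (f g : X → ℂ) (hf : Measurable f) (hg : Measurable g)
    (Cf Cg : ℝ) (hCf : ∀ z, ‖f z‖ ≤ Cf) (hCg : ∀ z, ‖g z‖ ≤ Cg)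
    (S : Set X) (hS : μ Sᶜ = 0)
    (hmix : ∀ x ∈ S, StronglyMixingSeq (fun n => f (T^[n] x))) :
    Tendsto (fun h : ℕ => ∫ z, f (T^[h] z) * (starRingEnd ℂ) (g z) ∂μ) atTop (𝓝 0) := by
  have hTm : Measurable T := hT.measurable
  set F : ℕ → X → ℂ := fun h z => f (T^[h] z) * (starRingEnd ℂ) (g z) with hF
  have hFmeas : ∀ h, Measurable (F h) := by
    intro h
    exact ((hf.comp (hTm.iterate h)).mul ((Complex.continuous_conj.measurable).comp hg))
  set M : ℝ := (max Cf 0) * (max Cg 0) with hM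
  have hM0 : 0 ≤ M := mul_nonneg (le_max_right _ _) (le_max_right _ _)
  have hFbound : ∀ h z, ‖F h z‖ ≤ M := by
    intro h z
    rw [hF]
    simp only [norm_mul, RingHomIsometric.norm_map]
    exact mul_le_mul ((hCf _).trans (le_max_left _ _)) ((hCg _).trans (le_max_left _ _))
      (norm_nonneg _) (le_max_right _ _)
  set A : ℕ → ℕ → X → ℂ := fun h N x =>
      (1 / (N : ℂ)) * ∑ n ∈ Finset.Icc 1 N, F h (T^[n] x) with hA
  have hAmeas : ∀ h N, Measurable (A h N) := by
    intro h N
    exact (measurable_const.mul (Finset.measurable_sum _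
      (fun n _ => (hFmeas h).comp (hTm.iterate n))))
  have hAbound : ∀ h N x, ‖A h N x‖ ≤ M := by
    intro h N x
    rcases Nat.eq_zero_or_pos N with hN | hN
    · subst hN; simp [hA, hM0]
    · rw [hA]
      simp only [norm_mul, norm_div, norm_one]
      calc 1 / ‖(N : ℂ)‖ * ‖∑ n ∈ Finset.Icc 1 N, F h (T^[n] x)‖
          ≤ 1 / ‖(N : ℂ)‖ * (N * M) := by
            refine mul_le_mul_of_nonneg_left ?_ (by positivity)
            refine (norm_sum_le _ _).trans ?_
            calc ∑ n ∈ Finset.Icc 1 N, ‖F h (T^[n] x)‖ ≤ ∑ n ∈ Finset.Icc 1 N, M :=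
                  Finset.sum_le_sum fun n _ => hFbound h _
              _ = N * M := by simp [Nat.card_Icc]
        _ = M := by
            rw [Complex.norm_natCast]
            field_simp
  -- integral of averages
  have hFint : ∀ h (n : ℕ), Integrable (fun x => F h (T^[n] x)) μ := by
    intro h n
    exact Integrable.mono' (integrable_const M)
      (((hFmeas h).comp (hTm.iterate n)).aestronglyMeasurable)
      (ae_of_all _ fun x => hFbound h _)
  have hFcomp : ∀ h (n : ℕ), ∫ x, F h (T^[n] x) ∂μ = ∫ z, F h z ∂μ := by
    intro h n
    have : ∫ z, F h z ∂μ = ∫ z, F h z ∂(Measure.map T^[n] μ) := by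
      rw [(hT.iterate n).map_eq]
    rw [this, integral_map (hTm.iterate n).aemeasurable]
    rw [(hT.iterate n).map_eq]
    exact (hFmeas h).aestronglyMeasurable
  have hAint : ∀ h N, 1 ≤ N → ∫ x, A h N x ∂μ = ∫ z, F h z ∂μ := by
    intro h N hN
    rw [hA]
    simp only
    rw [MeasureTheory.integral_const_mul, integral_finset_sum _ (fun n _ => hFint h n)]
    rw [Finset.sum_congr rfl (fun n _ => hFcomp h n), Finset.sum_const, Nat.card_Icc]
    simp only [Nat.add_sub_cancel, nsmul_eq_mul]
    rw [← mul_assoc, one_div, inv_mul_cancel₀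
      (Nat.cast_ne_zero.mpr (Nat.one_le_iff_ne_zero.mp hN)), one_mul]
  -- Koopman operator and von Neumann mean ergodic theorem
  have hFmem : ∀ h, MemLp (fun z => F h (T z)) 2 μ :=
    fun h => MemLp.of_bound ((hFmeas h).comp hTm).aestronglyMeasurable M
      (ae_of_all _ fun z => hFbound h (T z))
  set G : ℕ → Lp ℂ 2 μ := fun h => (hFmem h).toLp _ with hGdef
  set U : Lp ℂ 2 μ →L[ℂ] Lp ℂ 2 μ :=
    (Lp.compMeasurePreservingₗᵢ ℂ T hT).toContinuousLinearMap with hUdef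
  have hUnorm : ‖U‖ ≤ 1 := LinearIsometry.norm_toContinuousLinearMap_le _
  have hUcoe : ∀ v : Lp ℂ 2 μ, (U v : X → ℂ) =ᵐ[μ] fun x => v (T x) :=
    fun v => Lp.coeFn_compMeasurePreserving v hT
  have hUiter : ∀ (n : ℕ) (v : Lp ℂ 2 μ),
      ((⇑U)^[n] v : X → ℂ) =ᵐ[μ] fun x => v (T^[n] x) := by
    intro n
    induction n with
    | zero => intro v; simp
    | succ n ih =>
      intro v
      rw [Function.iterate_succ_apply]
      have h2 := (hT.iterate n).quasiMeasurePreserving.ae_eq_comp (hUcoe v)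
      filter_upwards [ih (U v), h2] with x hx1 hx2
      rw [hx1]
      have hx2' : (U v : X → ℂ) (T^[n] x) = v (T (T^[n] x)) := hx2
      rw [hx2', ← Function.iterate_succ_apply' T n x]
  have hGcoe : ∀ h, (G h : X → ℂ) =ᵐ[μ] fun z => F h (T z) := fun h => MemLp.coeFn_toLp _
  have hsumcoe : ∀ (s : Finset ℕ) (v : ℕ → Lp ℂ 2 μ),
      ((∑ i ∈ s, v i : Lp ℂ 2 μ) : X → ℂ) =ᵐ[μ] fun x => ∑ i ∈ s, (v i : X → ℂ) x := by
    intro s v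
    induction s using Finset.induction_on with
    | empty => simpa [Pi.zero_def] using Lp.coeFn_zero ℂ 2 μ
    | insert _ _ hnotmem =>
      rename_i a s ih
      rw [Finset.sum_insert hnotmem]
      filter_upwards [Lp.coeFn_add (v a) (∑ i ∈ s, v i), ih] with x hx1 hx2
      rw [hx1]
      simp only [Pi.add_apply, hx2, Finset.sum_insert hnotmem]
  have havgcoe : ∀ h N, ((birkhoffAverage ℂ (⇑U) id N (G h) : Lp ℂ 2 μ) : X → ℂ)
      =ᵐ[μ] A h N := by
    intro h N
    have e1 : birkhoffAverage ℂ (⇑U) id N (G h)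
        = (N : ℂ)⁻¹ • ∑ n ∈ Finset.range N, (⇑U)^[n] (G h) := by
      simp [birkhoffAverage, birkhoffSum]
    rw [e1]
    have h3 : ∀ n : ℕ, ((⇑U)^[n] (G h) : X → ℂ) =ᵐ[μ] fun x => F h (T^[n+1] x) := by
      intro n
      refine (hUiter n (G h)).trans ?_
      have := (hT.iterate n).quasiMeasurePreserving.ae_eq_comp (hGcoe h)
      filter_upwards [this] with x hx
      have hx' : (G h : X → ℂ) (T^[n] x) = F h (T (T^[n] x)) := hx
      rw [hx', ← Function.iterate_succ_apply' T n x]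
    have h4 : ∀ᵐ x ∂μ, ∀ n : ℕ,
        ((⇑U)^[n] (G h) : X → ℂ) x = F h (T^[n+1] x) := ae_all_iff.mpr fun n => h3 n
    filter_upwards [Lp.coeFn_smul ((N : ℂ)⁻¹) (∑ n ∈ Finset.range N, (⇑U)^[n] (G h)),
      hsumcoe (Finset.range N) (fun n => (⇑U)^[n] (G h)), h4] with x hx1 hx2 hx3
    rw [hx1]
    simp only [Pi.smul_apply, hx2, smul_eq_mul]
    rw [Finset.sum_congr rfl (fun n _ => hx3 n)]
    show _ = (1 / (N : ℂ)) * ∑ n ∈ Finset.Icc 1 N, F h (T^[n] x)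
    rw [one_div]
    congr 1
    rw [← Finset.Ico_add_one_right_eq_Icc, Finset.sum_Ico_eq_sum_range]
    have hNN : N + 1 - 1 = N := Nat.succ_sub_one N
    rw [hNN]
    exact Finset.sum_congr rfl fun n _ => by rw [add_comm 1 n]
  -- limits of Birkhoff averages in L²
  have hvN : ∀ h, ∃ P : Lp ℂ 2 μ,
      Tendsto (fun N => (birkhoffAverage ℂ (⇑U) id N (G h) : Lp ℂ 2 μ)) atTop (𝓝 P) :=
    fun h => ⟨_, U.tendsto_birkhoffAverage_orthogonalProjection hUnorm (G h)⟩
  choose P hP using hvN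
  -- choose a common subsequence
  have hstep : ∀ (prev q : ℕ), ∃ N : ℕ, prev < N ∧ ∀ h ≤ q,
      ‖(birkhoffAverage ℂ (⇑U) id N (G h) : Lp ℂ 2 μ) - P h‖ ≤ (1/2 : ℝ)^q := by
    intro prev q
    have hev : ∀ᶠ N in atTop, ∀ h ∈ Finset.range (q+1),
        ‖(birkhoffAverage ℂ (⇑U) id N (G h) : Lp ℂ 2 μ) - P h‖ ≤ (1/2 : ℝ)^q := by
      rw [Filter.eventually_all_finset]
      intro h _
      have := Metric.tendsto_nhds.mp (hP h) ((1/2:ℝ)^q) (by positivity)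
      filter_upwards [this] with N hN
      rw [dist_eq_norm] at hN
      exact hN.le
    obtain ⟨N, hN1, hN2⟩ := (hev.and (eventually_gt_atTop prev)).exists
    exact ⟨N, hN2, fun h hh => hN1 h (Finset.mem_range.mpr (Nat.lt_succ_of_le hh))⟩
  choose next hnext1 hnext2 using hstep
  set ns : ℕ → ℕ := fun q => Nat.rec 0 (fun q prev => next prev (q+1)) q with hns
  have hns_succ : ∀ q, ns (q+1) = next (ns q) (q+1) := fun q => rfl
  have hns_mono : StrictMono ns := by
    apply strictMono_nat_of_lt_succ
    intro q
    rw [hns_succ]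
    exact hnext1 _ _
  have hns_bd : ∀ q h, h ≤ q + 1 →
      ‖(birkhoffAverage ℂ (⇑U) id (ns (q+1)) (G h) : Lp ℂ 2 μ) - P h‖ ≤ (1/2 : ℝ)^(q+1) := by
    intro q h hh
    rw [hns_succ]
    exact hnext2 _ _ h hh
  -- a.e. convergence along the subsequence
  have hconv : ∀ h, ∀ᵐ x ∂μ, Tendsto (fun q => A h (ns q) x) atTop (𝓝 ((P h : X → ℂ) x)) := by
    intro h
    have hu : ∀ q : ℕ,
        ‖(birkhoffAverage ℂ (⇑U) id (ns (q + h + 1)) (G h) : Lp ℂ 2 μ) - P h‖ ≤ (1/2 : ℝ)^q := by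
      intro q
      refine (hns_bd (q + h) h (by omega)).trans ?_
      exact pow_le_pow_of_le_one (by norm_num) (by norm_num) (by omega)
    have hae := sm_ae_tendsto_of_norm_le μ _ hu
    have hsub : ∀ᵐ x ∂μ, ∀ q : ℕ,
        (((birkhoffAverage ℂ (⇑U) id (ns (q + h + 1)) (G h) : Lp ℂ 2 μ) - P h : Lp ℂ 2 μ) : X → ℂ) x
          = A h (ns (q + h + 1)) x - (P h : X → ℂ) x := by
      rw [ae_all_iff]
      intro q
      filter_upwards [Lp.coeFn_sub (birkhoffAverage ℂ (⇑U) id (ns (q + h + 1)) (G h)) (P h),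
        havgcoe h (ns (q + h + 1))] with x hx1 hx2
      rw [hx1]
      simp [hx2]
    filter_upwards [hae, hsub] with x hx1 hx2
    have h5 : Tendsto (fun q => A h (ns (q + h + 1)) x - (P h : X → ℂ) x) atTop (𝓝 0) := by
      refine hx1.congr fun q => ?_
      exact hx2 q
    have h6 : Tendsto (fun q => A h (ns (q + h + 1)) x) atTop (𝓝 ((P h : X → ℂ) x)) := by
      have := h5.add (tendsto_const_nhds (x := (P h : X → ℂ) x))
      simpa using this
    have h7 : Tendsto (fun q => A h (ns q) x) atTop (𝓝 ((P h : X → ℂ) x)) := by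
      rw [← tendsto_add_atTop_iff_nat (h + 1)]
      exact h6
    exact h7
  have hconvAll : ∀ᵐ x ∂μ, ∀ h : ℕ,
      Tendsto (fun q => A h (ns q) x) atTop (𝓝 ((P h : X → ℂ) x)) := ae_all_iff.mpr hconv
  have hns0 : ns 0 = 0 := rfl
  clear hns hns_succ
  clear_value ns
  have hns_ge : ∀ q : ℕ, 1 ≤ ns (q + 1) := by
    intro q
    have := hns_mono (Nat.succ_pos q)
    rw [hns0] at this
    exact this
  -- the integral of P h equals the correlation integral
  have hPint : ∀ h, ∫ x, (P h : X → ℂ) x ∂μ = ∫ z, F h z ∂μ := by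
    intro h
    have hdom : Tendsto (fun q => ∫ x, A h (ns (q+1)) x ∂μ) atTop
        (𝓝 (∫ x, (P h : X → ℂ) x ∂μ)) := by
      refine tendsto_integral_of_dominated_convergence (fun _ => M)
        (fun q => (hAmeas h (ns (q+1))).aestronglyMeasurable)
        (integrable_const M)
        (fun q => ae_of_all _ fun x => hAbound h _ x) ?_
      filter_upwards [hconv h] with x hx
      exact hx.comp (tendsto_add_atTop_nat 1)
    have hconst : ∀ q : ℕ, ∫ x, A h (ns (q+1)) x ∂μ = ∫ z, F h z ∂μ :=
      fun q => hAint h _ (hns_ge q)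
    have hdom2 : Tendsto (fun q : ℕ => ∫ x, A h (ns (q+1)) x ∂μ) atTop
        (𝓝 (∫ z, F h z ∂μ)) := by
      rw [funext hconst]
      exact tendsto_const_nhds
    exact tendsto_nhds_unique hdom hdom2
  -- the limits are bounded
  have hPbd : ∀ᵐ x ∂μ, ∀ h, ‖(P h : X → ℂ) x‖ ≤ M := by
    filter_upwards [hconvAll] with x hx h
    exact le_of_tendsto ((hx h).norm) (Eventually.of_forall fun q => hAbound h _ x)
  -- strong mixing at a.e. point
  have hSae : ∀ᵐ x ∂μ, x ∈ S := by
    rw [ae_iff]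
    simpa [Set.compl_def] using hS
  have hmix2 : ∀ᵐ x ∂μ, Tendsto (fun h => ‖(P h : X → ℂ) x‖) atTop (𝓝 0) := by
    filter_upwards [hSae, hconvAll] with x hxS hxc
    obtain ⟨-, hsm⟩ := hmix x hxS
    refine hsm (fun n => g (T^[n] x)) ⟨max Cg 0, fun n => (hCg _).trans (le_max_left _ _)⟩
      ns hns_mono (fun h => (P h : X → ℂ) x) ?_
    intro h _
    have hFn : ∀ n : ℕ, F h (T^[n] x) = f (T^[n + h] x) * (starRingEnd ℂ) (g (T^[n] x)) := by
      intro n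
      show f (T^[h] (T^[n] x)) * (starRingEnd ℂ) (g (T^[n] x)) = _
      rw [← Function.iterate_add_apply, add_comm h n]
    refine (hxc h).congr fun q => ?_
    show A h (ns q) x = (1 / ((ns q : ℕ) : ℂ)) * ∑ n ∈ Finset.Icc 1 (ns q),
      f (T^[n + h] x) * (starRingEnd ℂ) (g (T^[n] x))
    show (1 / ((ns q : ℕ) : ℂ)) * ∑ n ∈ Finset.Icc 1 (ns q), F h (T^[n] x) = _
    rw [Finset.sum_congr rfl fun n _ => hFn n]
  -- conclude by dominated convergence in h
  have hFinal : Tendsto (fun h => ∫ x, (P h : X → ℂ) x ∂μ) atTop (𝓝 0) := by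
    have hlim : ∀ᵐ x ∂μ, Tendsto (fun h => (P h : X → ℂ) x) atTop (𝓝 0) := by
      filter_upwards [hmix2] with x hx
      exact tendsto_zero_iff_norm_tendsto_zero.mpr hx
    have := tendsto_integral_of_dominated_convergence (F := fun h x => (P h : X → ℂ) x)
      (f := fun _ => (0 : ℂ)) (fun _ => M)
      (fun h => Lp.aestronglyMeasurable (P h))
      (integrable_const M)
      (fun h => hPbd.mono fun x hx => hx h) hlim
    simpa using this
  have heq : (fun h : ℕ => ∫ z, F h z ∂μ) = fun h => ∫ x, (P h : X → ℂ) x ∂μ :=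
    funext fun h => (hPint h).symm
  show Tendsto (fun h : ℕ => ∫ z, F h z ∂μ) atTop (𝓝 0)
  rw [heq]
  exact hFinal

end SMaux

theorem stmt11 (μ : MeasureTheory.Measure (Set.Icc (0 : ℝ) 1))
    [MeasureTheory.IsProbabilityMeasure μ]
    (T : Set.Icc (0 : ℝ) 1 → Set.Icc (0 : ℝ) 1)
    (hT : MeasureTheory.MeasurePreserving T μ μ)
    (H : ∀ f : Set.Icc (0 : ℝ) 1 → ℂ, Measurable f → (∃ C : ℝ, ∀ z, ‖f z‖ ≤ C) →
      (∫ z, f z ∂μ) = 0 →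
      ∃ A : Set (Set.Icc (0 : ℝ) 1), μ Aᶜ = 0 ∧
        ∀ x ∈ A, StronglyMixingSeq (fun n : ℕ => f (T^[n] x))) :
    ∀ A B : Set (Set.Icc (0 : ℝ) 1), MeasurableSet A → MeasurableSet B →
      Tendsto (fun h : ℕ => (μ (T^[h] ⁻¹' A ∩ B)).toReal) atTop
        (nhds ((μ A).toReal * (μ B).toReal)) := by
  intro A B hA hB
  set a : ℝ := (μ A).toReal with ha
  set b : ℝ := (μ B).toReal with hb
  set f : Set.Icc (0:ℝ) 1 → ℂ :=
    fun z => Set.indicator A (fun _ => (1:ℂ)) z - (a : ℂ) with hfdef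
  set g : Set.Icc (0:ℝ) 1 → ℂ := fun z => Set.indicator B (fun _ => (1:ℂ)) z with hgdef
  have hfm : Measurable f := (measurable_const.indicator hA).sub measurable_const
  have hgm : Measurable g := measurable_const.indicator hB
  have hfb : ∀ z, ‖f z‖ ≤ 1 + ‖(a:ℂ)‖ := by
    intro z
    refine (norm_sub_le _ _).trans ?_
    have : ‖Set.indicator A (fun _ => (1:ℂ)) z‖ ≤ 1 := by
      by_cases hz : z ∈ A <;> simp [hz]
    linarith
  have hgb : ∀ z, ‖g z‖ ≤ 1 := by
    intro z
    rw [hgdef]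
    by_cases hz : z ∈ B <;> simp [hz]
  have hintA : Integrable (Set.indicator A (fun _ => (1:ℂ))) μ :=
    (integrable_const 1).indicator hA
  have hf0 : ∫ z, f z ∂μ = 0 := by
    rw [hfdef]
    rw [integral_sub hintA (integrable_const _)]
    rw [integral_indicator_const (1:ℂ) hA, integral_const]
    simp [ha, measure_univ, Measure.real]
  obtain ⟨S, hS, hmixS⟩ := H f hfm ⟨1 + ‖(a:ℂ)‖, hfb⟩ hf0
  have hkey := sm_key μ T hT f g hfm hgm _ _ hfb hgb S hS hmixS
  have hcomp : ∀ h : ℕ, ∫ z, f (T^[h] z) * (starRingEnd ℂ) (g z) ∂μ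
      = ((μ (T^[h] ⁻¹' A ∩ B)).toReal : ℂ) - (a : ℂ) * (b : ℂ) := by
    intro h
    have hmeas : MeasurableSet (T^[h] ⁻¹' A ∩ B) :=
      ((hT.iterate h).measurable hA).inter hB
    have hint1 : Integrable (Set.indicator (T^[h] ⁻¹' A ∩ B) (fun _ => (1:ℂ))) μ :=
      (integrable_const 1).indicator hmeas
    have hint2 : Integrable (fun z => (a:ℂ) * g z) μ :=
      (((integrable_const 1).indicator hB).const_mul _)
    have heq : ∀ z, f (T^[h] z) * (starRingEnd ℂ) (g z)
        = Set.indicator (T^[h] ⁻¹' A ∩ B) (fun _ => (1:ℂ)) z - (a:ℂ) * g z := by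
      intro z
      rw [hfdef, hgdef]
      by_cases h1 : T^[h] z ∈ A <;> by_cases h2 : z ∈ B <;>
        simp [Set.indicator_apply, Set.mem_preimage, h1, h2] <;> ring
    calc ∫ z, f (T^[h] z) * (starRingEnd ℂ) (g z) ∂μ
        = ∫ z, (Set.indicator (T^[h] ⁻¹' A ∩ B) (fun _ => (1:ℂ)) z - (a:ℂ) * g z) ∂μ := by
          exact integral_congr_ae (ae_of_all _ heq)
      _ = ((μ (T^[h] ⁻¹' A ∩ B)).toReal : ℂ) - (a : ℂ) * (b : ℂ) := by
          rw [integral_sub hint1 hint2, integral_indicator_const (1:ℂ) hmeas,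
            MeasureTheory.integral_const_mul, hgdef, integral_indicator_const (1:ℂ) hB]
          simp [hb, Measure.real]
  rw [funext hcomp] at hkey
  have h2 : Tendsto (fun h : ℕ => ((μ (T^[h] ⁻¹' A ∩ B)).toReal : ℂ)) atTop
      (𝓝 ((a : ℂ) * (b : ℂ))) := by
    have := hkey.add (tendsto_const_nhds (x := (a:ℂ) * (b:ℂ)))
    simpa using this
  have h3 := (Complex.continuous_re.tendsto _).comp h2
  simpa [Function.comp_def] using h3
end

section
/- Let (X, B, μ, T) be a measure-preserving system. Suppose that for every f ∈ L^∞ with ∫ f dμ = 0 there is a full-measure set A_f such that for every x ∈ A_f the sequence (f(Tⁿx)) is a weakly mixing sequence. Then T is weakly mixing. -/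
open Filter Finset MeasureTheory Topology
open scoped Classical
open scoped ENNReal



lemma lp_coeFn_sum {X : Type*} [MeasurableSpace X] {μ : MeasureTheory.Measure X}
    {ι : Type*} (s : Finset ι) (f : ι → Lp ℂ 2 μ) :
    ⇑(∑ i ∈ s, f i) =ᵐ[μ] fun x => ∑ i ∈ s, (f i : X → ℂ) x := by
  classical
  induction s using Finset.induction with
  | empty => simp only [Finset.sum_empty]; exact Lp.coeFn_zero (E := ℂ) (p := 2) (μ := μ)
  | insert a s hnm ih =>
      rw [Finset.sum_insert hnm]
      filter_upwards [Lp.coeFn_add (f a) (∑ i ∈ s, f i), ih] with x hx1 hx2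
      rw [Finset.sum_insert hnm, hx1, Pi.add_apply, hx2]

lemma ae_tendsto_zero_of_summable_norm {X : Type*} [MeasurableSpace X]
    {μ : MeasureTheory.Measure X} [IsProbabilityMeasure μ] (u : ℕ → Lp ℂ 2 μ)
    (hsum : Summable fun q => ‖u q‖) :
    ∀ᵐ x ∂μ, Tendsto (fun q => (u q : X → ℂ) x) atTop (𝓝 0) := by
  have hmeas : ∀ q, AEMeasurable (fun x => (‖(u q : X → ℂ) x‖₊ : ℝ≥0∞)) μ :=
    fun q => (Lp.aestronglyMeasurable (u q)).enorm
  have h1 : ∀ q, ∫⁻ x, ‖(u q : X → ℂ) x‖₊ ∂μ ≤ ENNReal.ofReal ‖u q‖ := by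
    intro q
    have he : ∫⁻ x, (‖(u q : X → ℂ) x‖₊ : ℝ≥0∞) ∂μ = eLpNorm (u q) 1 μ :=
      by rw [eLpNorm_one_eq_lintegral_enorm]; rfl
    rw [he]
    calc eLpNorm (u q) 1 μ ≤ eLpNorm (u q) 2 μ :=
          eLpNorm_le_eLpNorm_of_exponent_le (by norm_num) (Lp.aestronglyMeasurable (u q))
      _ = ENNReal.ofReal ‖u q‖ := by
          rw [Lp.norm_def, ENNReal.ofReal_toReal (Lp.eLpNorm_ne_top _)]
  have h2 : ∫⁻ x, ∑' q, (‖(u q : X → ℂ) x‖₊ : ℝ≥0∞) ∂μ ≠ ∞ := by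
    rw [lintegral_tsum hmeas]
    refine ne_of_lt (lt_of_le_of_lt (ENNReal.tsum_le_tsum h1) ?_)
    rw [← ENNReal.ofReal_tsum_of_nonneg (fun q => norm_nonneg _) hsum]
    exact ENNReal.ofReal_lt_top
  filter_upwards [ae_lt_top' (AEMeasurable.ennreal_tsum hmeas) h2] with x hx
  have h0 : Tendsto (fun q => (‖(u q : X → ℂ) x‖₊ : ℝ≥0∞)) atTop (𝓝 0) :=
    ENNReal.tendsto_atTop_zero_of_tsum_ne_top hx.ne
  rw [tendsto_zero_iff_norm_tendsto_zero]
  have := (ENNReal.tendsto_toReal (a := (0 : ℝ≥0∞)) (by simp)).comp h0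
  simpa [Function.comp_def] using this



/-- A weakly mixing measure preserving system. -/
def WeaklyMixingSys {X : Type*} [MeasurableSpace X] (μ : MeasureTheory.Measure X)
    (T : X → X) : Prop :=
  ∀ A B : Set X, MeasurableSet A → MeasurableSet B →
    Tendsto (fun N : ℕ => (1 / (N : ℝ)) * ∑ n ∈ Finset.Icc 1 N,
      |(μ (A ∩ T^[n] ⁻¹' B)).toReal - (μ A).toReal * (μ B).toReal|) atTop (nhds 0)

/-- A strongly mixing measure preserving system. -/
def StronglyMixingSys {X : Type*} [MeasurableSpace X] (μ : MeasureTheory.Measure X)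
    (T : X → X) : Prop :=
  ∀ A B : Set X, MeasurableSet A → MeasurableSet B →
    Tendsto (fun n : ℕ => (μ (A ∩ T^[n] ⁻¹' B)).toReal) atTop
      (nhds ((μ A).toReal * (μ B).toReal))

theorem stmt12 {X : Type*} [MeasurableSpace X] (μ : MeasureTheory.Measure X)
    [MeasureTheory.IsProbabilityMeasure μ] (T : X → X)
    (hT : MeasureTheory.MeasurePreserving T μ μ)
    (H : ∀ f : X → ℂ, Measurable f → (∃ C : ℝ, ∀ z, ‖f z‖ ≤ C) →
      (∫ z, f z ∂μ) = 0 →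
      ∃ A : Set X, μ Aᶜ = 0 ∧
        ∀ x ∈ A, WeaklyMixingSeq (fun n : ℕ => f (T^[n] x))) :
    WeaklyMixingSys μ T := by
  intro A B hA hB
  set b : ℝ := (μ B).toReal with hbdef
  set f : X → ℂ := fun z => B.indicator (fun _ => (1:ℂ)) z - (b:ℂ) with hfdef
  have hfmeas : Measurable f := (measurable_const.indicator hB).sub measurable_const
  have hbnn : 0 ≤ b := ENNReal.toReal_nonneg
  set Cb : ℝ := 1 + b with hCbdef
  have hCb0 : (0:ℝ) ≤ Cb := by positivity
  have hfbdd : ∀ z, ‖f z‖ ≤ Cb := by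
    intro z
    refine (norm_sub_le _ _).trans ?_
    have h1 : ‖B.indicator (fun _ => (1:ℂ)) z‖ ≤ 1 := by
      by_cases hz : z ∈ B <;> simp [Set.indicator_apply, hz]
    have h2 : ‖(b:ℂ)‖ = b := by
      rw [Complex.norm_real, Real.norm_eq_abs, abs_of_nonneg hbnn]
    rw [h2, hCbdef]; linarith
  have hfint0 : (∫ z, f z ∂μ) = 0 := by
    rw [hfdef]
    rw [integral_sub ((integrable_const (1:ℂ)).indicator hB) (integrable_const _)]
    rw [integral_indicator_const _ hB, integral_const]
    simp [hbdef, Measure.real]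
  set indA : X → ℂ := A.indicator (fun _ => (1:ℂ)) with hindAdef
  set efun : ℕ → X → ℂ := fun h z => f (T^[h] (T z)) * indA (T z) with hedef
  have hemeas : ∀ h, Measurable (efun h) := fun h =>
    ((hfmeas.comp ((hT.measurable.iterate h).comp hT.measurable)).mul
      ((measurable_const.indicator hA).comp hT.measurable))
  have hindbd : ∀ z, ‖indA z‖ ≤ 1 := by
    intro z; by_cases hz : z ∈ A <;> simp [hindAdef, Set.indicator_apply, hz]
  have hebdd : ∀ h z, ‖efun h z‖ ≤ Cb := by
    intro h z
    rw [hedef]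
    calc ‖f (T^[h] (T z)) * indA (T z)‖ = ‖f (T^[h] (T z))‖ * ‖indA (T z)‖ := norm_mul _ _
      _ ≤ Cb * 1 := by
          exact mul_le_mul (hfbdd _) (hindbd _) (norm_nonneg _) hCb0
      _ = Cb := mul_one _
  have hmemE : ∀ h, MemLp (efun h) 2 μ := fun h =>
    MemLp.of_bound (hemeas h).aestronglyMeasurable Cb (ae_of_all _ (hebdd h))
  set Eh : ℕ → Lp ℂ 2 μ := fun h => (hmemE h).toLp (efun h) with hEhdef
  set U : Lp ℂ 2 μ →L[ℂ] Lp ℂ 2 μ :=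
    (Lp.compMeasurePreservingₗᵢ (E := ℂ) (p := 2) ℂ T hT).toContinuousLinearMap with hUdef
  have hUnorm : ‖U‖ ≤ 1 := LinearIsometry.norm_toContinuousLinearMap_le _
  have hUcoe : ∀ G : Lp ℂ 2 μ, ⇑(U G) =ᵐ[μ] ⇑G ∘ T := by
    intro G
    exact Lp.coeFn_compMeasurePreserving G hT
  set BA : ℕ → ℕ → Lp ℂ 2 μ := fun h N => birkhoffAverage ℂ (⇑U) _root_.id N (Eh h) with hBAdef
  have hP : ∀ h : ℕ, ∃ Ph : Lp ℂ 2 μ,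
      Tendsto (fun N => BA h N) atTop (𝓝 Ph) :=
    fun h => ⟨_, ContinuousLinearMap.tendsto_birkhoffAverage_orthogonalProjection U hUnorm (Eh h)⟩
  choose P hP using hP
  set avg : ℕ → ℕ → X → ℂ := fun h N x => (N:ℂ)⁻¹ • ∑ k ∈ Finset.range N, efun h (T^[k] x)
    with havgdef
  have hiter : ∀ (G : Lp ℂ 2 μ) (G' : X → ℂ), ⇑G =ᵐ[μ] G' →
      ∀ k : ℕ, ⇑((⇑U)^[k] G) =ᵐ[μ] fun x => G' (T^[k] x) := by
    intro G G' hG k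
    induction k with
    | zero => simpa using hG
    | succ k ih =>
        rw [Function.iterate_succ_apply']
        calc ⇑(U ((⇑U)^[k] G)) =ᵐ[μ] (⇑((⇑U)^[k] G)) ∘ T := hUcoe _
          _ =ᵐ[μ] (fun x => G' (T^[k] x)) ∘ T := hT.quasiMeasurePreserving.ae_eq_comp ih
          _ = fun x => G' (T^[k+1] x) := by
              funext x; simp [Function.iterate_succ_apply]
  have hcoeBA : ∀ (h N : ℕ), ⇑(BA h N) =ᵐ[μ] avg h N := by
    intro h N
    have hBA : BA h N = (N:ℂ)⁻¹ • ∑ k ∈ Finset.range N, (⇑U)^[k] (Eh h) := by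
      simp [hBAdef, birkhoffAverage, birkhoffSum]
    rw [hBA]
    have h1 := Lp.coeFn_smul ((N:ℂ)⁻¹) (∑ k ∈ Finset.range N, (⇑U)^[k] (Eh h))
    have h2 := lp_coeFn_sum (Finset.range N) (fun k => (⇑U)^[k] (Eh h))
    have h3 : ∀ᵐ x ∂μ, ∀ k : ℕ, ((⇑U)^[k] (Eh h) : X → ℂ) x = efun h (T^[k] x) :=
      ae_all_iff.2 fun k => hiter (Eh h) (efun h) ((hmemE h).coeFn_toLp) k
    filter_upwards [h1, h2, h3] with x hx1 hx2 hx3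
    rw [hx1, Pi.smul_apply, hx2, havgdef]
    simp only []
    congr 1
    exact Finset.sum_congr rfl (fun k _ => hx3 k)
  -- construction of the subsequence Nq
  have hkey : ∀ q : ℕ, ∃ M : ℕ, ∀ N ≥ M, ∀ h ≤ q,
      ‖BA h N - P h‖ ≤ (1/2:ℝ)^q := by
    intro q
    have hev : ∀ h : ℕ, ∀ᶠ N in atTop,
        ‖BA h N - P h‖ ≤ (1/2:ℝ)^q := by
      intro h
      obtain ⟨M, hM⟩ := Metric.tendsto_atTop.mp (hP h) ((1/2:ℝ)^q) (by positivity)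
      exact eventually_atTop.2 ⟨M, fun N hN => by
        have := (hM N hN).le
        rwa [dist_eq_norm] at this⟩
    have : ∀ᶠ N in atTop, ∀ h ∈ Finset.range (q+1),
        ‖BA h N - P h‖ ≤ (1/2:ℝ)^q :=
      (Filter.eventually_all_finset _).2 fun h _ => hev h
    obtain ⟨M, hM⟩ := eventually_atTop.1 this
    exact ⟨M, fun N hN h hh => hM N hN h (Finset.mem_range_succ_iff.2 hh)⟩
  choose M hM using hkey
  set Nq : ℕ → ℕ := fun q => Nat.rec (max (M 0) 1) (fun q ih => max (M (q+1)) (ih+1)) q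
    with hNqdef
  have hNqsucc : ∀ q, Nq (q+1) = max (M (q+1)) (Nq q + 1) := fun q => rfl
  have hNqmono : StrictMono Nq := strictMono_nat_of_lt_succ fun q => by
    rw [hNqsucc]
    exact lt_of_lt_of_le (Nat.lt_succ_self _) (le_max_right _ _)
  have hNq1 : ∀ q, 1 ≤ Nq q := by
    intro q
    induction q with
    | zero => exact le_max_right _ _
    | succ q ih => rw [hNqsucc]; exact le_trans (le_trans ih (Nat.le_succ _)) (le_max_right _ _)
  have hNqM : ∀ q, M q ≤ Nq q := by
    intro q
    cases q with
    | zero => exact le_max_left _ _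
    | succ q => rw [hNqsucc]; exact le_max_left _ _
  have hNqbound : ∀ h q : ℕ, h ≤ q →
      ‖BA h (Nq q) - P h‖ ≤ (1/2:ℝ)^q :=
    fun h q hq => hM q (Nq q) (hNqM q) h hq
  -- a.e. convergence along the subsequence
  have hC : ∀ h : ℕ, ∀ᵐ x ∂μ,
      Tendsto (fun q => avg h (Nq q) x) atTop (𝓝 ((P h : X → ℂ) x)) := by
    intro h
    have hsumm : Summable (fun q => ‖BA h (Nq q) - P h‖) := by
      refine Summable.of_norm_bounded_eventually (g := fun q => (1/2:ℝ)^q)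
        (summable_geometric_of_lt_one (by norm_num) (by norm_num)) ?_
      rw [Nat.cofinite_eq_atTop]
      exact eventually_atTop.2 ⟨h, fun q hq => by
        rw [Real.norm_eq_abs, abs_of_nonneg (norm_nonneg _)]
        exact hNqbound h q hq⟩
    have h1 := ae_tendsto_zero_of_summable_norm _ hsumm
    have h2 : ∀ᵐ x ∂μ, ∀ q : ℕ,
        ((BA h (Nq q) - P h : Lp ℂ 2 μ) : X → ℂ) x
          = (BA h (Nq q) : X → ℂ) x - (P h : X → ℂ) x :=
      ae_all_iff.2 fun q => Lp.coeFn_sub _ _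
    have h3 : ∀ᵐ x ∂μ, ∀ q : ℕ,
        (BA h (Nq q) : X → ℂ) x = avg h (Nq q) x :=
      ae_all_iff.2 fun q => hcoeBA h (Nq q)
    filter_upwards [h1, h2, h3] with x hx1 hx2 hx3
    have hx1' : Tendsto (fun q =>
        (BA h (Nq q) : X → ℂ) x - (P h : X → ℂ) x)
        atTop (𝓝 0) := by
      refine hx1.congr fun q => ?_
      rw [← hx2 q]
    rw [tendsto_sub_nhds_zero_iff] at hx1'
    exact hx1'.congr fun q => hx3 q
  have hclaimC : ∀ᵐ x ∂μ, ∀ h : ℕ,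
      Tendsto (fun q => avg h (Nq q) x) atTop (𝓝 ((P h : X → ℂ) x)) := ae_all_iff.2 hC
  have havgbdd : ∀ (h N : ℕ) (x : X), ‖avg h N x‖ ≤ Cb := by
    intro h N x
    rcases Nat.eq_zero_or_pos N with hN | hN
    · simp [havgdef, hN, hCb0]
    · rw [havgdef]
      simp only []
      rw [norm_smul, norm_inv, Complex.norm_natCast]
      calc (N:ℝ)⁻¹ * ‖∑ k ∈ Finset.range N, efun h (T^[k] x)‖
          ≤ (N:ℝ)⁻¹ * (N * Cb) := by
            refine mul_le_mul_of_nonneg_left ?_ (by positivity)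
            refine (norm_sum_le _ _).trans ?_
            calc ∑ k ∈ Finset.range N, ‖efun h (T^[k] x)‖
                ≤ ∑ _k ∈ Finset.range N, Cb := Finset.sum_le_sum fun k _ => hebdd h _
              _ = N * Cb := by simp [mul_comm]
        _ = Cb := by
            field_simp
  have hPbdd : ∀ᵐ x ∂μ, ∀ h : ℕ, ‖(P h : X → ℂ) x‖ ≤ Cb := by
    filter_upwards [hclaimC] with x hx
    intro h
    exact le_of_tendsto (hx h).norm (Filter.Eventually.of_forall fun q => havgbdd h (Nq q) x)
  have hintegrable_comp : ∀ (h k : ℕ), Integrable (fun x => efun h (T^[k] x)) μ := by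
    intro h k
    refine Integrable.mono' (integrable_const Cb) ?_ (ae_of_all _ fun x => hebdd h _)
    exact ((hemeas h).comp (hT.measurable.iterate k)).aestronglyMeasurable
  have hint_comp : ∀ (h k : ℕ), ∫ x, efun h (T^[k] x) ∂μ = ∫ x, efun h x ∂μ := by
    intro h k
    have hmap : Measure.map (T^[k]) μ = μ := (hT.iterate k).map_eq
    have hg : AEStronglyMeasurable (efun h) (Measure.map (T^[k]) μ) := by
      rw [hmap]; exact (hemeas h).aestronglyMeasurable
    conv_rhs => rw [← hmap]
    exact (integral_map (hT.measurable.iterate k).aemeasurable hg).symm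
  have hint_avg : ∀ h q : ℕ, ∫ x, avg h (Nq q) x ∂μ = ∫ x, efun h x ∂μ := by
    intro h q
    have hN1 : 1 ≤ Nq q := hNq1 q
    have hNne : ((Nq q : ℂ)) ≠ 0 := Nat.cast_ne_zero.2 (by omega)
    rw [havgdef]
    simp only []
    rw [integral_smul, integral_finset_sum _ (fun k _ => hintegrable_comp h k)]
    rw [Finset.sum_congr rfl (fun k _ => hint_comp h k), Finset.sum_const, Finset.card_range]
    rw [← Nat.cast_smul_eq_nsmul ℂ, smul_smul, inv_mul_cancel₀ hNne, one_smul]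
  have hPint : ∀ h, Integrable ((P h : X → ℂ)) μ :=
    fun h => MemLp.integrable one_le_two (Lp.memLp (P h))
  have havgmeas : ∀ h N, Measurable (avg h N) := by
    intro h N
    rw [havgdef]
    exact measurable_const.mul (Finset.measurable_sum _ fun k _ =>
      (hemeas h).comp (hT.measurable.iterate k))
  have hintP : ∀ h, ∫ x, (P h : X → ℂ) x ∂μ = ∫ x, efun h x ∂μ := by
    intro h
    have hdom : Tendsto (fun q => ∫ x, avg h (Nq q) x ∂μ) atTop
        (𝓝 (∫ x, (P h : X → ℂ) x ∂μ)) := by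
      refine tendsto_integral_of_dominated_convergence (fun _ => Cb)
        (fun q => (havgmeas h (Nq q)).aestronglyMeasurable)
        (integrable_const Cb)
        (fun q => ae_of_all _ fun x => havgbdd h (Nq q) x) (hC h)
    have hdom' : Tendsto (fun _q : ℕ => ∫ x, efun h x ∂μ) atTop
        (𝓝 (∫ x, (P h : X → ℂ) x ∂μ)) := hdom.congr fun q => hint_avg h q
    exact tendsto_nhds_unique hdom' tendsto_const_nhds
  have hval : ∀ h : ℕ, ∫ x, efun h x ∂μ
      = (((μ (A ∩ T^[h] ⁻¹' B)).toReal - (μ A).toReal * (μ B).toReal : ℝ) : ℂ) := by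
    intro h
    have h1 : ∫ x, efun h x ∂μ = ∫ z, f (T^[h] z) * indA z ∂μ := by
      have hgmeas : Measurable fun z => f (T^[h] z) * indA z :=
        (hfmeas.comp (hT.measurable.iterate h)).mul (measurable_const.indicator hA)
      have hmap : Measure.map T μ = μ := hT.map_eq
      have hg : AEStronglyMeasurable (fun z => f (T^[h] z) * indA z) (Measure.map T μ) := by
        rw [hmap]; exact hgmeas.aestronglyMeasurable
      calc ∫ x, efun h x ∂μ = ∫ x, (fun z => f (T^[h] z) * indA z) (T x) ∂μ := rfl
        _ = ∫ z, f (T^[h] z) * indA z ∂(Measure.map T μ) :=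
            (integral_map hT.measurable.aemeasurable hg).symm
        _ = ∫ z, f (T^[h] z) * indA z ∂μ := by rw [hmap]
    rw [h1]
    have h2 : (fun z => f (T^[h] z) * indA z)
        = fun z => (A ∩ T^[h] ⁻¹' B).indicator (fun _ => (1:ℂ)) z - (b:ℂ) * indA z := by
      funext z
      rw [hfdef, hindAdef]
      simp only []
      by_cases hz1 : z ∈ A <;> by_cases hz2 : T^[h] z ∈ B <;>
        simp [Set.indicator_apply, hz1, hz2, Set.mem_preimage]
    rw [h2]
    have hpre : MeasurableSet (A ∩ T^[h] ⁻¹' B) := hA.inter ((hT.measurable.iterate h) hB)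
    rw [integral_sub ((integrable_const (1:ℂ)).indicator hpre)
      (((integrable_const (1:ℂ)).indicator hA).const_mul _)]
    rw [integral_indicator_const _ hpre, integral_const_mul, integral_indicator_const _ hA]
    simp only [Complex.real_smul, mul_one, hbdef, Measure.real]
    push_cast
    ring
  have hcorr_eq : ∀ (x : X) (h N : ℕ),
      (1/(N:ℂ)) * ∑ n ∈ Finset.Icc 1 N, f (T^[n+h] x) * (starRingEnd ℂ) (indA (T^[n] x))
        = avg h N x := by
    intro x h N
    have hconj : ∀ z : X, (starRingEnd ℂ) (indA z) = indA z := by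
      intro z; rw [hindAdef]; by_cases hz : z ∈ A <;> simp [Set.indicator_apply, hz]
    have hsum : ∑ n ∈ Finset.Icc 1 N, f (T^[n+h] x) * (starRingEnd ℂ) (indA (T^[n] x))
        = ∑ k ∈ Finset.range N, efun h (T^[k] x) := by
      rw [← Finset.Ico_add_one_right_eq_Icc, Finset.sum_Ico_eq_sum_range]
      refine Finset.sum_congr rfl fun k _ => ?_
      rw [hconj]
      have e1 : T (T^[k] x) = T^[1+k] x := by
        rw [Function.iterate_add_apply]; simp
      have e2 : T^[h] (T^[1+k] x) = T^[(1+k)+h] x := by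
        rw [add_comm (1+k) h]
        exact (Function.iterate_add_apply T h (1+k) x).symm
      rw [hedef]
      simp only []
      rw [e1, e2]
    rw [hsum, havgdef]
    simp only []
    rw [one_div, smul_eq_mul]
  obtain ⟨A₀, hA₀null, hWM⟩ := H f hfmeas ⟨Cb, hfbdd⟩ hfint0
  have hA₀ae : ∀ᵐ x ∂μ, x ∈ A₀ := by
    rw [ae_iff]
    simpa [Set.compl_def] using hA₀null
  have hmix : ∀ᵐ x ∂μ, Tendsto (fun Hn : ℕ =>
      (1/(Hn:ℝ)) * ∑ h ∈ Finset.Icc 1 Hn, ‖(P h : X → ℂ) x‖) atTop (𝓝 0) := by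
    filter_upwards [hA₀ae, hclaimC] with x hx0 hxC
    have hwm := hWM x hx0
    refine hwm.2 (fun n => indA (T^[n] x)) ⟨1, fun n => hindbd _⟩ Nq hNqmono
      (fun h => (P h : X → ℂ) x) ?_
    intro h _
    exact (hxC h).congr fun q => (hcorr_eq x h (Nq q)).symm
  have hnormval : ∀ h : ℕ,
      |(μ (A ∩ T^[h] ⁻¹' B)).toReal - (μ A).toReal * (μ B).toReal|
        = ‖∫ x, (P h : X → ℂ) x ∂μ‖ := by
    intro h
    rw [hintP h, hval h, Complex.norm_real, Real.norm_eq_abs]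
  set J : ℕ → ℝ := fun N => ∫ x, (1/(N:ℝ)) * ∑ h ∈ Finset.Icc 1 N, ‖(P h : X → ℂ) x‖ ∂μ
    with hJdef
  have hJto : Tendsto J atTop (𝓝 0) := by
    have h0 : (0:ℝ) = ∫ _x, (0:ℝ) ∂μ := by simp
    rw [hJdef, h0]
    refine tendsto_integral_of_dominated_convergence (fun _ => Cb) ?_ (integrable_const Cb) ?_ hmix
    · intro N
      refine AEStronglyMeasurable.const_mul ?_ _
      exact Finset.aestronglyMeasurable_fun_sum _ fun h _ => (Lp.aestronglyMeasurable (P h)).norm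
    · intro N
      filter_upwards [hPbdd] with x hx
      rw [Real.norm_eq_abs, abs_of_nonneg (by positivity)]
      rcases Nat.eq_zero_or_pos N with hN | hN
      · simp [hN, hCb0]
      · calc (1/(N:ℝ)) * ∑ h ∈ Finset.Icc 1 N, ‖(P h : X → ℂ) x‖
            ≤ (1/(N:ℝ)) * ∑ _h ∈ Finset.Icc 1 N, Cb := by
              refine mul_le_mul_of_nonneg_left (Finset.sum_le_sum fun h _ => hx h) (by positivity)
          _ = Cb := by
              rw [Finset.sum_const, Nat.card_Icc, Nat.add_sub_cancel, nsmul_eq_mul]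
              have : (N:ℝ) ≠ 0 := Nat.cast_ne_zero.2 (by omega)
              field_simp
  refine squeeze_zero (fun N => ?_) (fun N => ?_) hJto
  · positivity
  · have hJN : J N = (1/(N:ℝ)) * ∑ h ∈ Finset.Icc 1 N, ∫ x, ‖(P h : X → ℂ) x‖ ∂μ := by
      rw [hJdef]
      simp only []
      rw [integral_const_mul, integral_finset_sum _ fun h _ => (hPint h).norm]
    rw [hJN]
    refine mul_le_mul_of_nonneg_left ?_ (by positivity)
    refine Finset.sum_le_sum fun h _ => ?_
    rw [hnormval h]
    exact norm_integral_le_integral_norm _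
end
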